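/- arXiv:2309.05902 — 3 statements merged into one kernel-verified Lean document; each statement's English description precedes it below -/
import Mathlib

section
/- For every natural number n ≥ 1, in the standard Game of Cycles, the line sub-game of type 2 — a path of n unmarked edges with one pre-marked directed edge attached at the left end and directed toward the path (•→•—•⋯•—•) — has Grundy value n − 1. -/
/-- Edge state on a path/cycle: `none` = unmarked, `some true` = directed "rightwards"
(from vertex `i` to vertex `i+1`), `some false` = directed "leftwards". -/
abbrev EdgeState := Option Bool

/-- Minimum excludant of a set of naturals: the least natural number not in the set. -/
noncomputable def mex (S : Set ℕ) : ℕ := sInf {n | n ∉ S}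

/-- Generic fueled Grundy value of an impartial game with move function `moves`
(the fuel always dominates the number of remaining moves in our uses, so this
computes the Sprague–Grundy value). -/
noncomputable def grundyAux {α : Type} (moves : α → Set α) : ℕ → α → ℕ
  | 0, _ => 0
  | k+1, x => mex ((grundyAux moves k) '' (moves x))

/-- A line position (list of edge states, vertex `j+1` lying between edges `j` and
`j+1`) is admissible: no non-exempt vertex is a sink (all incident edges marked and
directed toward it) and, unless `sourceAllowed`, no non-exempt vertex is a source
(all incident edges marked and directed away from it).  The left endpoint (vertex
`0`) is exempt iff `exL`, the right endpoint iff `exR`. -/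
def LineOK (sourceAllowed exL exR : Bool) (es : List EdgeState) : Prop :=
  (∀ j : ℕ, ¬ (es[j]? = some (some true) ∧ es[j+1]? = some (some false))) ∧
  (sourceAllowed = true ∨
    ∀ j : ℕ, ¬ (es[j]? = some (some false) ∧ es[j+1]? = some (some true))) ∧
  (exL = true ∨ (es.head? ≠ some (some false) ∧
    (sourceAllowed = true ∨ es.head? ≠ some (some true)))) ∧
  (exR = true ∨ (es.getLast? ≠ some (some true) ∧
    (sourceAllowed = true ∨ es.getLast? ≠ some (some false))))

/-- A legal move on a line position marks an unmarked edge with one of the two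
directions so that the resulting position is admissible. -/
def lineMoves (sourceAllowed exL exR : Bool) (es : List EdgeState) :
    Set (List EdgeState) :=
  { es' | ∃ j d, es[j]? = some none ∧ es' = es.set j (some d) ∧
      LineOK sourceAllowed exL exR es' }

/-- Grundy value (Nimber) of the line (sub-)game with `n` unmarked edges.
`l` (resp. `r`) is an optional pre-marked directed edge attached at the left
(resp. right) end of the path (`some true` pointing rightwards, `some false`
pointing leftwards); the outer endpoint of a pre-marked edge is exempt from the
no-sink (and, when sources are disallowed, no-source) restriction.
`sourceAllowed = false` gives the standard Game of Cycles, `sourceAllowed = true`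
gives Cycles with Sources. -/
noncomputable def lineNim (sourceAllowed : Bool) (l r : Option Bool) (n : ℕ) : ℕ :=
  let es : List EdgeState :=
    (l.map some).toList ++ List.replicate n none ++ (r.map some).toList
  grundyAux (lineMoves sourceAllowed l.isSome r.isSome) es.length es

namespace LineAux

theorem xor_one_eq (s : ℕ) : 1 ^^^ s = if s % 2 = 0 then s + 1 else s - 1 := by
  conv_lhs => rw [← Nat.bit_decide_mod_two_eq_one_shiftRight_one s]
  have h1 : (1:ℕ) = Nat.bit true 0 := rfl
  rw [h1, Nat.xor_bit]
  rcases Nat.mod_two_eq_zero_or_one s with h | h <;>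
    simp [h, Nat.bit_val, Nat.shiftRight_one] <;> omega

theorem xor_one_le (s : ℕ) : 1 ^^^ s ≤ s + 1 := by
  rw [xor_one_eq]; split <;> omega

theorem le_xor_one (s : ℕ) : s ≤ (1 ^^^ s) + 1 := by
  rw [xor_one_eq]; split <;> omega

theorem mod_xor_mod (a b : ℕ) : (a % 2) ^^^ (b % 2) = (a + b) % 2 := by
  rcases Nat.mod_two_eq_zero_or_one a with h1 | h1 <;>
    rcases Nat.mod_two_eq_zero_or_one b with h2 | h2 <;> rw [h1, h2] <;>
    [skip; skip; skip; skip] <;> norm_num <;> omega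

def adjOK : EdgeState → EdgeState → Prop := fun a b => ∀ x y, a = some x → b = some y → x = y

def chain : EdgeState → List EdgeState → Prop
  | _, [] => True
  | p, e :: r => adjOK p e ∧ chain e r

def Valid (p : EdgeState) (t : List EdgeState) : Prop :=
  chain p t ∧ t.getLast? = some none

def tmoves (p : EdgeState) (t : List EdgeState) : Set (List EdgeState) :=
  {t' | ∃ u d v, t = u ++ none :: v ∧ t' = u ++ (some d) :: v ∧ Valid p t'}

def segf : Bool → List EdgeState → ℕ
  | _, [] => 0
  | b, none :: rest => if rest.all (· == none) then rest.length else 1 ^^^ segf b rest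
  | b, some d :: rest => (if b = d then 0 else 1) ^^^ segf d rest

@[simp] theorem adjOK_none_left (e : EdgeState) : adjOK none e := by
  intro x y h; cases h

@[simp] theorem adjOK_none_right (e : EdgeState) : adjOK e none := by
  intro x y _ h; cases h

theorem adjOK_some_some {a b : Bool} : adjOK (some a) (some b) ↔ a = b := by
  constructor
  · intro h; exact h a b rfl rfl
  · rintro rfl x y hx hy; cases hx; cases hy; rfl

@[simp] theorem chain_nil (p : EdgeState) : chain p [] := trivial

theorem chain_cons {p e : EdgeState} {r : List EdgeState} :
    chain p (e :: r) ↔ adjOK p e ∧ chain e r := Iff.rfl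

theorem chain_replicate_none_append (k : ℕ) (p : EdgeState) (s : List EdgeState) (hk : 0 < k) :
    chain p (List.replicate k none ++ s) ↔ chain none s := by
  induction k generalizing p with
  | zero => omega
  | succ k ih =>
    rw [List.replicate_succ, List.cons_append, chain_cons]
    rcases Nat.eq_zero_or_pos k with rfl | hk'
    · simp [chain_cons]
    · rw [ih none hk']; simp

@[simp] theorem chain_replicate_none (k : ℕ) (p : EdgeState) :
    chain p (List.replicate k none) := by
  induction k generalizing p with
  | zero => simp
  | succ k ih => rw [List.replicate_succ, chain_cons]; exact ⟨adjOK_none_right p, ih none⟩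

/-! ### segf computation lemmas -/

@[simp] theorem all_none_replicate (m : ℕ) :
    (List.replicate m (none : EdgeState)).all (· == none) = true := by
  simp [List.all_eq_true, List.eq_of_mem_replicate]

theorem segf_replicate (b : Bool) (m : ℕ) :
    segf b (List.replicate m none) = m - 1 := by
  cases m with
  | zero => rfl
  | succ m => rw [List.replicate_succ]; simp [segf]

theorem not_all_none {l r : List EdgeState} {d : Bool} :
    ((l ++ some d :: r).all (· == none)) = false := by
  rw [Bool.eq_false_iff]
  intro h
  rw [List.all_eq_true] at h
  have := h (some d) (by simp)
  simp at this

theorem segf_replicate_append (b d : Bool) (k : ℕ) (rest : List EdgeState) :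
    segf b (List.replicate k none ++ some d :: rest) =
      (k % 2) ^^^ ((if b = d then 0 else 1) ^^^ segf d rest) := by
  induction k generalizing b with
  | zero => simp [segf]
  | succ k ih =>
    rw [List.replicate_succ, List.cons_append]
    show segf b (none :: (List.replicate k none ++ some d :: rest)) = _
    rw [segf, not_all_none]
    simp only [Bool.false_eq_true, if_false, ih]
    rw [← Nat.xor_assoc]
    have h : (1:ℕ) ^^^ (k % 2) = (k+1) % 2 := by
      rcases Nat.mod_two_eq_zero_or_one k with hk | hk <;> rw [hk] <;> norm_num <;> omega
    rw [h]

/-! ### structural decomposition -/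

theorem decomp (t : List EdgeState) :
    t = List.replicate t.length none ∨
      ∃ k d rest, t = List.replicate k none ++ some d :: rest := by
  induction t with
  | nil => left; rfl
  | cons x r ih =>
    cases x with
    | some d => right; exact ⟨0, d, r, rfl⟩
    | none =>
      rcases ih with h | ⟨k, d, rest, h⟩
      · left; rw [List.length_cons, List.replicate_succ]; rw [← h]
      · right; exact ⟨k+1, d, rest, by rw [List.replicate_succ, List.cons_append, h]⟩

theorem repl_split {u v : List EdgeState} {m : ℕ}
    (h : u ++ none :: v = List.replicate m none) :
    u = List.replicate u.length none ∧ v = List.replicate v.length none ∧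
      m = u.length + v.length + 1 := by
  have hlen : m = u.length + v.length + 1 := by
    have := congrArg List.length h
    simp at this; omega
  have hmem : ∀ x ∈ u ++ none :: v, x = (none : EdgeState) := by
    rw [h]; exact fun x hx => List.eq_of_mem_replicate hx
  refine ⟨?_, ?_, hlen⟩
  · exact List.eq_replicate_of_mem (fun x hx => hmem x (by simp [hx]))
  · exact List.eq_replicate_of_mem (fun x hx => hmem x (by simp [hx]))

theorem move_split : ∀ (k : ℕ) (u v rest : List EdgeState) (d : Bool),
    u ++ none :: v = List.replicate k none ++ some d :: rest →
    (u.length < k ∧ u = List.replicate u.length none ∧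
      v = List.replicate (k - 1 - u.length) none ++ some d :: rest) ∨
    (∃ u₂, u = List.replicate k none ++ some d :: u₂ ∧ u₂ ++ none :: v = rest) := by
  intro k
  induction k with
  | zero =>
    intro u v rest d h
    simp only [List.replicate_zero, List.nil_append] at h
    cases u with
    | nil => simp at h
    | cons x u' =>
      right
      rw [List.cons_append, List.cons.injEq] at h
      exact ⟨u', by simp [h.1], h.2⟩
  | succ k ih =>
    intro u v rest d h
    rw [List.replicate_succ, List.cons_append] at h
    cases u with
    | nil =>
      left
      simp only [List.nil_append, List.cons.injEq] at h
      refine ⟨by simp, rfl, ?_⟩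
      have hk : k + 1 - 1 - ([] : List EdgeState).length = k := by simp
      rw [h.2, hk]
    | cons x u' =>
      rw [List.cons_append, List.cons.injEq] at h
      obtain ⟨rfl, h2⟩ := h
      rcases ih u' v rest d h2 with ⟨h1, h3, h4⟩ | ⟨u₂, h1, h3⟩
      · left
        refine ⟨by simp; omega, ?_, ?_⟩
        · rw [List.length_cons, List.replicate_succ]; rw [← h3]
        · rw [h4]; congr 2; simp; omega
      · right
        exact ⟨u₂, by rw [List.replicate_succ, List.cons_append, h1], h3⟩

/-! ### mex -/

theorem mex_eq {S : Set ℕ} {v : ℕ} (h1 : v ∉ S) (h2 : ∀ u < v, u ∈ S) :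
    mex S = v := by
  unfold mex
  apply le_antisymm
  · exact Nat.sInf_le h1
  · by_contra hlt
    push_neg at hlt
    have hmem : sInf {n | n ∉ S} ∈ {n | n ∉ S} := Nat.sInf_mem ⟨v, h1⟩
    exact hmem (h2 _ hlt)

/-! ### value lemmas -/

theorem segf_alpha (b d' d : Bool) (j k : ℕ) (hj : j < k) (rest : List EdgeState) :
    segf b (List.replicate j none ++
        some d' :: (List.replicate (k-1-j) none ++ some d :: rest)) =
      1 ^^^ segf b (List.replicate k none ++ some d :: rest) := by
  rw [segf_replicate_append, segf_replicate_append, segf_replicate_append]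
  have hs : j + (k - 1 - j) + 1 = k := by omega
  rcases Nat.mod_two_eq_zero_or_one j with hj2|hj2 <;>
  rcases Nat.mod_two_eq_zero_or_one (k-1-j) with hr2|hr2 <;>
  rcases Nat.mod_two_eq_zero_or_one k with hk2|hk2 <;>
  cases b <;> cases d' <;> cases d <;>
  rw [hj2, hr2, hk2] <;>
  first
    | (exfalso; omega)
    | (simp only [← Nat.xor_assoc]; norm_num)

theorem segf_alpha_final (b d' : Bool) (j m : ℕ) (hj : j + 1 < m) :
    segf b (List.replicate j none ++ some d' :: List.replicate (m-1-j) none) =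
      (j % 2) ^^^ ((if b = d' then 0 else 1) ^^^ (m-2-j)) := by
  rw [segf_replicate_append, segf_replicate]
  have : m - 1 - j - 1 = m - 2 - j := by omega
  rw [this]

theorem alpha_final_ne (b d' : Bool) (j m : ℕ) (hj : j + 1 < m) (hj0 : j = 0 → b = d') :
    (j % 2) ^^^ ((if b = d' then (0:ℕ) else 1) ^^^ (m-2-j)) ≠ m - 1 := by
  rcases Nat.lt_or_ge j 1 with h0 | h1
  · have hj' : j = 0 := by omega
    subst hj'
    rw [hj0 rfl]
    simp only [if_pos rfl]
    norm_num
    omega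
  · rcases Nat.lt_or_ge j 2 with h1' | h2
    · have hj' : j = 1 := by omega
      subst hj'
      by_cases hbd : b = d'
      · simp only [if_pos hbd]
        norm_num
        rw [xor_one_eq]
        split <;> omega
      · simp only [if_neg hbd]
        norm_num
        omega
    · -- j ≥ 2 : magnitude bound
      intro hcontra
      have hc : (if b = d' then (0:ℕ) else 1) ≤ 1 := by split <;> omega
      have hb1 : (if b = d' then (0:ℕ) else 1) ^^^ (m-2-j) ≤ (m-2-j) + 1 := by
        split
        · simp
        · exact xor_one_le _
      have hb2 : (j % 2) ^^^ ((if b = d' then (0:ℕ) else 1) ^^^ (m-2-j)) ≤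
          ((if b = d' then (0:ℕ) else 1) ^^^ (m-2-j)) + 1 := by
        rcases Nat.mod_two_eq_zero_or_one j with h|h <;> rw [h]
        · simp
        · exact xor_one_le _
      omega

theorem choose_dir (b : Bool) (j u : ℕ) :
    (j % 2) ^^^ ((if b = (if j % 2 = 0 then b else !b) then (0:ℕ) else 1) ^^^ u) = u := by
  by_cases h : j % 2 = 0
  · rw [if_pos h, if_pos rfl, h]; simp
  · have h1 : j % 2 = 1 := by omega
    rw [if_neg h, if_neg (by simp), h1, Nat.xor_xor_cancel_left]

/-! ### getLast? helpers -/

theorem getLast?_cons_ne_nil {α : Type*} {x : α} {l : List α} (h : l ≠ []) :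
    (x :: l).getLast? = l.getLast? := by
  cases l with
  | nil => exact absurd rfl h
  | cons y r => exact List.getLast?_cons_cons

theorem getLast?_append_cons {α : Type*} (u : List α) (x : α) (v : List α) :
    (u ++ x :: v).getLast? = (x :: v).getLast? := by
  rw [List.getLast?_append]
  have h : (x :: v).getLast?.isSome := by
    rw [List.getLast?_isSome]; simp
  obtain ⟨y, hy⟩ := Option.isSome_iff_exists.mp h
  rw [hy]; rfl

/-! ### facts from validity in the marked-prefix case -/

theorem rest_ne_nil {k : ℕ} {d : Bool} {rest : List EdgeState}
    (h : (List.replicate k none ++ some d :: rest).getLast? = some none) :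
    rest ≠ [] := by
  intro hr
  subst hr
  rw [getLast?_append_cons] at h
  simp at h

theorem chain_tail {k : ℕ} {b d : Bool} {rest : List EdgeState}
    (h : chain (some b) (List.replicate k none ++ some d :: rest)) :
    chain (some d) rest := by
  rcases Nat.eq_zero_or_pos k with rfl | hk
  · simp only [List.replicate_zero, List.nil_append, chain_cons] at h
    exact h.2
  · rw [chain_replicate_none_append k _ _ hk, chain_cons] at h
    exact h.2

theorem chain_head_eq {k : ℕ} {b d : Bool} {rest : List EdgeState}
    (h : chain (some b) (List.replicate k none ++ some d :: rest)) (hk : k = 0) :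
    b = d := by
  subst hk
  simp only [List.replicate_zero, List.nil_append, chain_cons] at h
  exact adjOK_some_some.mp h.1

theorem valid_tail {k : ℕ} {b d : Bool} {rest : List EdgeState}
    (h : Valid (some b) (List.replicate k none ++ some d :: rest)) :
    Valid (some d) rest := by
  have hne := rest_ne_nil h.2
  refine ⟨chain_tail h.1, ?_⟩
  have h2 := h.2
  rw [getLast?_append_cons, getLast?_cons_ne_nil hne] at h2
  exact h2

theorem chain_build {k : ℕ} {b d : Bool} {r' : List EdgeState}
    (hk0 : k = 0 → b = d) (hc : chain (some d) r') :
    chain (some b) (List.replicate k none ++ some d :: r') := by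
  rcases Nat.eq_zero_or_pos k with rfl | hk
  · simp only [List.replicate_zero, List.nil_append, chain_cons]
    exact ⟨adjOK_some_some.mpr (hk0 rfl), hc⟩
  · rw [chain_replicate_none_append k _ _ hk, chain_cons]
    exact ⟨adjOK_none_left _, hc⟩

/-! ### lifting a move on `rest` to a move on the full list -/

theorem lift_move {k : ℕ} {b d : Bool} {rest r' : List EdgeState}
    (hk0 : k = 0 → b = d) (hr' : r' ∈ tmoves (some d) rest) :
    List.replicate k none ++ some d :: r' ∈
      tmoves (some b) (List.replicate k none ++ some d :: rest) ∧
    segf b (List.replicate k none ++ some d :: r') =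
      (k % 2) ^^^ ((if b = d then 0 else 1) ^^^ segf d r') := by
  obtain ⟨ur, dr, vr, hsplit, hr'eq, hval⟩ := hr'
  constructor
  · refine ⟨List.replicate k none ++ some d :: ur, dr, vr, ?_, ?_, ?_, ?_⟩
    · rw [hsplit]; simp
    · rw [hr'eq]; simp
    · exact chain_build hk0 hval.1
    · rw [getLast?_append_cons, getLast?_cons_ne_nil, hval.2]
      rw [hr'eq]; simp
  · exact segf_replicate_append b d k r'

/-! ### the two key properties of `segf`, by strong induction -/

theorem main_sc : ∀ (n : ℕ) (t : List EdgeState), t.length ≤ n → ∀ b : Bool,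
    Valid (some b) t →
    (∀ t' ∈ tmoves (some b) t, segf b t' ≠ segf b t) ∧
    (∀ u, u < segf b t → ∃ t' ∈ tmoves (some b) t, segf b t' = u) := by
  intro n
  induction n with
  | zero =>
    intro t ht b hv
    have ht0 : t = [] := List.eq_nil_of_length_eq_zero (by omega)
    subst ht0
    have h2 := hv.2
    simp at h2
  | succ n ih =>
    intro t ht b hv
    rcases decomp t with hall | ⟨k, d, rest, rfl⟩
    · -- Case I : t is all unmarked, t = replicate m none
      set m := t.length with hm
      have htne : t ≠ [] := by
        intro h
        have h2 := hv.2
        rw [h] at h2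
        simp at h2
      have hm1 : 1 ≤ m := List.length_pos_iff.mpr htne
      have hseg : segf b t = m - 1 := by rw [hall, segf_replicate]
      constructor
      · -- soundness
        rintro t' ⟨u, d', v, hsplit, rfl, hval⟩
        have hrepl := repl_split (hsplit.symm.trans hall)
        obtain ⟨hu, hv', hmlen⟩ := hrepl
        have hvne : v ≠ [] := by
          intro h
          subst h
          have h2 := hval.2
          rw [getLast?_append_cons] at h2
          simp at h2
        have hvlen : 1 ≤ v.length := List.length_pos_iff.mpr hvne
        set j := u.length with hjdef
        have hjm : j + 1 < m := by omega
        have hv2 : v = List.replicate (m - 1 - j) none := by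
          rw [hv']; congr 1; omega
        rw [hseg, hu, hv2, segf_alpha_final b d' j m hjm]
        apply alpha_final_ne b d' j m hjm
        intro hj0
        have hu0 : u = [] := List.eq_nil_of_length_eq_zero (by omega)
        have hc := hval.1
        rw [hu0] at hc
        simp only [List.nil_append, chain_cons] at hc
        exact adjOK_some_some.mp hc.1
      · -- completeness
        intro u hu
        rw [hseg] at hu
        set j := m - 2 - u with hj
        set d' : Bool := if j % 2 = 0 then b else !b with hd'
        have hum2 : u ≤ m - 2 := by omega
        have hjm : j + 1 < m := by omega
        have hm2j : m - 2 - j = u := by omega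
        refine ⟨List.replicate j none ++ some d' :: List.replicate (m-1-j) none,
          ⟨List.replicate j none, d', List.replicate (m-1-j) none, ?_, rfl, ?_, ?_⟩, ?_⟩
        · -- t decomposes
          rw [hall]
          have hrepl : List.replicate m (none : EdgeState) =
              List.replicate j none ++ none :: List.replicate (m-1-j) none := by
            conv_lhs => rw [show m = j + ((m - 1 - j) + 1) by omega]
            rw [List.replicate_add, List.replicate_succ]
          exact hrepl
        · -- chain
          apply chain_build (b := b) (d := d')
          · intro hj0
            rw [hd', hj0]
            norm_num
          · exact chain_replicate_none _ _
        · -- getLast?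
          rw [getLast?_append_cons, getLast?_cons_ne_nil, List.getLast?_replicate]
          · rw [if_neg]; omega
          · intro h
            have := congrArg List.length h
            simp at this
            omega
        · -- value
          rw [segf_alpha_final b d' j m hjm, hm2j, hd']
          exact choose_dir b j u
    · -- Case II : t = replicate k none ++ some d :: rest
      have hvrest := valid_tail hv
      have hk0 : k = 0 → b = d := chain_head_eq hv.1
      have hlen : rest.length ≤ n := by
        have := ht
        simp only [List.length_append, List.length_replicate, List.length_cons] at this
        omega
      have hIH := ih rest hlen d hvrest
      have hseg : segf b (List.replicate k none ++ some d :: rest) =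
          (k % 2) ^^^ ((if b = d then 0 else 1) ^^^ segf d rest) :=
        segf_replicate_append b d k rest
      constructor
      · -- soundness
        rintro t' ⟨u, d'', v, hsplit, rfl, hval⟩
        rcases move_split k u v rest d hsplit.symm with
          ⟨hlt, hu, hvv⟩ | ⟨u₂, hu, hrest⟩
        · rw [hu, hvv]
          rw [segf_alpha b d'' d u.length k hlt rest]
          intro hcontra
          have h0 : (1:ℕ) ^^^ segf b (List.replicate k none ++ some d :: rest) =
              0 ^^^ segf b (List.replicate k none ++ some d :: rest) := by
            rw [Nat.zero_xor]; exact hcontra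
          have := Nat.xor_left_inj.mp h0
          omega
        · -- move inside rest
          have hr'mem : u₂ ++ some d'' :: v ∈ tmoves (some d) rest := by
            refine ⟨u₂, d'', v, hrest.symm, rfl, ?_, ?_⟩
            · have hc := hval.1
              rw [hu] at hc
              simp only [List.append_assoc, List.cons_append] at hc
              exact chain_tail hc
            · have h2 := hval.2
              rw [hu] at h2
              simp only [List.append_assoc, List.cons_append] at h2
              rw [getLast?_append_cons, getLast?_cons_ne_nil (by simp)] at h2
              exact h2
          have hval' : u ++ some d'' :: v =
              List.replicate k none ++ some d :: (u₂ ++ some d'' :: v) := by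
            rw [hu]; simp
          rw [hval', hseg, segf_replicate_append]
          intro hcontra
          have h1 := Nat.xor_right_inj.mp hcontra
          have h2 := Nat.xor_right_inj.mp h1
          exact hIH.1 _ hr'mem h2
      · -- completeness
        intro u hu
        have hw1 : (k % 2) ^^^ (if b = d then (0:ℕ) else 1) = 0 ∨
            (k % 2) ^^^ (if b = d then (0:ℕ) else 1) = 1 := by
          rcases Nat.mod_two_eq_zero_or_one k with h|h <;> rw [h] <;> split <;> norm_num
        have hVassoc : segf b (List.replicate k none ++ some d :: rest) =
            ((k % 2) ^^^ (if b = d then (0:ℕ) else 1)) ^^^ segf d rest := by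
          rw [hseg, Nat.xor_assoc]
        rcases hw1 with hw1 | hw1
        · -- parity prefix 0 : recurse directly
          rw [hVassoc, hw1, Nat.zero_xor] at hu
          obtain ⟨r', hr', hvr'⟩ := hIH.2 u hu
          have hlift := lift_move hk0 hr'
          refine ⟨_, hlift.1, ?_⟩
          rw [hlift.2, ← Nat.xor_assoc, hw1, Nat.zero_xor, hvr']
        · -- parity prefix 1
          rw [hVassoc, hw1] at hu
          have hk1 : 1 ≤ k := by
            by_contra hc
            have hk00 : k = 0 := by omega
            have hbd := hk0 hk00
            rw [hk00, if_pos hbd] at hw1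
            simp at hw1
          by_cases hus : u = segf d rest
          · -- first-run move, value s
            have hbd1 : (k - 1) % 2 = (if b = d then (0:ℕ) else 1) := by
              by_cases hbd : b = d
              · rw [if_pos hbd]
                rw [if_pos hbd] at hw1
                rcases Nat.mod_two_eq_zero_or_one k with h|h <;> rw [h] at hw1 <;>
                  norm_num at hw1 <;> omega
              · rw [if_neg hbd]
                rw [if_neg hbd] at hw1
                rcases Nat.mod_two_eq_zero_or_one k with h|h <;> rw [h] at hw1 <;>
                  norm_num at hw1 <;> omega
            refine ⟨some b :: (List.replicate (k-1) none ++ some d :: rest),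
              ⟨[], b, List.replicate (k-1) none ++ some d :: rest, ?_, rfl, ?_, ?_⟩, ?_⟩
            · conv_lhs => rw [show k = (k-1)+1 by omega, List.replicate_succ]
              simp
            · rw [chain_cons]
              constructor
              · exact adjOK_some_some.mpr rfl
              · apply chain_build
                · intro hk10
                  have hkk : k = 1 := by omega
                  rw [hkk] at hw1
                  by_cases hbd : b = d
                  · exact hbd
                  · rw [if_neg hbd] at hw1
                    norm_num at hw1
                · exact hvrest.1
            · have hrne : rest ≠ [] := rest_ne_nil hv.2
              rw [getLast?_cons_ne_nil (by simp), getLast?_append_cons,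
                getLast?_cons_ne_nil hrne]
              exact hvrest.2
            · show segf b _ = u
              rw [segf]
              rw [if_pos rfl, segf_replicate_append, Nat.zero_xor, ← Nat.xor_assoc,
                hbd1]
              rw [Nat.xor_self, Nat.zero_xor]
              exact hus.symm
          · -- recurse with w = 1 ^^^ u
            have hb1 := xor_one_le u
            have hb2 := le_xor_one u
            have hb3 := xor_one_le (segf d rest)
            have hb4 := le_xor_one (segf d rest)
            have hne : 1 ^^^ u ≠ segf d rest := by
              intro h
              have : u = 1 ^^^ segf d rest := by
                rw [← h, Nat.xor_xor_cancel_left]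
              omega
            have hw : 1 ^^^ u < segf d rest := by omega
            obtain ⟨r', hr', hvr'⟩ := hIH.2 (1 ^^^ u) hw
            have hlift := lift_move hk0 hr'
            refine ⟨_, hlift.1, ?_⟩
            rw [hlift.2, ← Nat.xor_assoc, hw1, hvr', Nat.xor_xor_cancel_left]

/-! ### bridge to `LineOK` / `lineMoves` -/

theorem mem_of_getLast?_eq {α : Type*} {l : List α} {x : α} (h : l.getLast? = some x) :
    x ∈ l := by
  obtain ⟨hne, hx⟩ := List.mem_getLast?_eq_getLast (l := l) (x := x) (by rw [h]; rfl)
  rw [hx]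
  exact List.getLast_mem hne

theorem chain_iff_pairs (p : EdgeState) (t : List EdgeState) :
    chain p t ↔ ∀ j x y, (p :: t)[j]? = some (some x) →
      (p :: t)[j+1]? = some (some y) → x = y := by
  induction t generalizing p with
  | nil =>
    simp only [chain_nil, true_iff]
    intro j x y h1 h2
    rw [List.getElem?_cons_succ] at h2
    simp at h2
  | cons e r ih =>
    rw [chain_cons, ih]
    constructor
    · rintro ⟨ha, hr⟩ j x y h1 h2
      cases j with
      | zero =>
        rw [List.getElem?_cons_zero] at h1
        rw [List.getElem?_cons_succ, List.getElem?_cons_zero] at h2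
        exact ha x y (by injection h1) (by injection h2)
      | succ i =>
        rw [List.getElem?_cons_succ] at h1 h2
        exact hr i x y h1 h2
    · intro h
      constructor
      · intro x y hx hy
        exact h 0 x y (by rw [List.getElem?_cons_zero, hx]) (by
          rw [List.getElem?_cons_succ, List.getElem?_cons_zero, hy])
      · intro j x y h1 h2
        exact h (j+1) x y (by rwa [List.getElem?_cons_succ]) (by rwa [List.getElem?_cons_succ])

theorem lineOK_iff {t : List EdgeState} (ht : t ≠ []) :
    LineOK false true false ((some true : EdgeState) :: t) ↔ Valid (some true) t := by
  constructor
  · rintro ⟨c1, c2, _, c4⟩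
    have c2' : ∀ j, ¬(((some true : EdgeState) :: t)[j]? = some (some false) ∧
        ((some true : EdgeState) :: t)[j+1]? = some (some true)) := by
      rcases c2 with h | h
      · exact absurd h (by simp)
      · exact h
    constructor
    · rw [chain_iff_pairs]
      intro j x y h1 h2
      cases x <;> cases y
      · rfl
      · exact absurd ⟨h1, h2⟩ (c2' j)
      · exact absurd ⟨h1, h2⟩ (c1 j)
      · rfl
    · rcases c4 with h | ⟨h1, h2⟩
      · exact absurd h (by simp)
      · rcases h2 with h2 | h2
        · exact absurd h2 (by simp)
        · have hL : ((some true : EdgeState) :: t).getLast? = t.getLast? :=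
            getLast?_cons_ne_nil ht
          rw [hL] at h1 h2
          obtain ⟨x, hx⟩ := Option.isSome_iff_exists.mp
            (by rw [List.getLast?_isSome]; exact ht)
          cases x with
          | none => exact hx
          | some bb =>
            cases bb
            · exact absurd hx h2
            · exact absurd hx h1
  · rintro ⟨hc, hl⟩
    rw [chain_iff_pairs] at hc
    have hL : ((some true : EdgeState) :: t).getLast? = t.getLast? :=
      getLast?_cons_ne_nil ht
    refine ⟨?_, Or.inr ?_, Or.inl rfl, Or.inr ⟨?_, Or.inr ?_⟩⟩
    · intro j ⟨h1, h2⟩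
      exact absurd (hc j true false h1 h2) (by simp)
    · intro j ⟨h1, h2⟩
      exact absurd (hc j false true h1 h2) (by simp)
    · rw [hL, hl]; simp
    · rw [hL, hl]; simp

theorem moves_bridge {t : List EdgeState} (ht : t ≠ []) :
    lineMoves false true false ((some true : EdgeState) :: t) =
      (fun t' => (some true : EdgeState) :: t') '' tmoves (some true) t := by
  ext es'
  constructor
  · rintro ⟨j, d, hget, hset, hok⟩
    cases j with
    | zero => rw [List.getElem?_cons_zero] at hget; simp at hget
    | succ i =>
      rw [List.getElem?_cons_succ] at hget
      obtain ⟨hlt, heq⟩ := List.getElem?_eq_some_iff.mp hget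
      obtain ⟨l₁, l₂, hdec, hlen, hseteq⟩ := List.exists_of_set (a' := (some d : EdgeState)) hlt
      rw [heq] at hdec
      have hok' : LineOK false true false ((some true : EdgeState) :: t.set i (some d)) := by
        rw [List.set_cons_succ] at hset
        rwa [hset] at hok
      have htne' : t.set i (some d) ≠ [] := by
        have hlen' : (t.set i (some d)).length = t.length := by simp
        intro h
        rw [h] at hlen'
        simp at hlen'
        omega
      have hval : Valid (some true) (t.set i (some d)) := (lineOK_iff htne').mp hok'
      refine ⟨t.set i (some d), ⟨l₁, d, l₂, hdec, hseteq, hval⟩, ?_⟩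
      rw [hset, List.set_cons_succ]
  · rintro ⟨t', ⟨u, d, v, hsplit, ht'eq, hval⟩, rfl⟩
    refine ⟨u.length + 1, d, ?_, ?_, ?_⟩
    · rw [List.getElem?_cons_succ, hsplit,
        List.getElem?_append_right (le_refl _)]
      simp
    · rw [List.set_cons_succ, hsplit, List.set_append]
      rw [if_neg (by omega)]
      have : u.length - u.length = 0 := by omega
      rw [this, List.set_cons_zero, ht'eq]
    · have ht'ne : t' ≠ [] := by
        rw [ht'eq]
        intro h
        have := congrArg List.length h
        simp at this
      exact (lineOK_iff ht'ne).mpr hval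

theorem count_move {u v : List EdgeState} {d : Bool} :
    (u ++ some d :: v).count none + 1 = (u ++ none :: v).count none := by
  simp [List.count_append, List.count_cons]
  omega

/-! ### the fueled Grundy computation -/

theorem grundy_eq : ∀ (fuel : ℕ) (t : List EdgeState),
    Valid (some true) t → t.count none ≤ fuel →
    grundyAux (lineMoves false true false) fuel ((some true : EdgeState) :: t) =
      segf true t := by
  intro fuel
  induction fuel with
  | zero =>
    intro t hval hc
    exfalso
    have hmem : (none : EdgeState) ∈ t := mem_of_getLast?_eq hval.2
    have := List.count_pos_iff.mpr hmem
    omega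
  | succ fuel ih =>
    intro t hval hc
    have htne : t ≠ [] := by
      intro h
      have h2 := hval.2
      rw [h] at h2
      simp at h2
    rw [grundyAux, moves_bridge htne, Set.image_image]
    have himg : (fun t' => grundyAux (lineMoves false true false) fuel
          ((some true : EdgeState) :: t')) '' tmoves (some true) t =
        segf true '' tmoves (some true) t := by
      apply Set.image_congr
      intro t' ht'
      obtain ⟨u, d, v, hsplit, ht'eq, hval'⟩ := ht'
      apply ih t' hval'
      have hcnt : t'.count none + 1 = t.count none := by
        rw [hsplit, ht'eq]
        exact count_move
      omega
    rw [himg]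
    have hmain := main_sc t.length t le_rfl true hval
    apply mex_eq
    · rintro ⟨t', hmem, heq⟩
      exact hmain.1 t' hmem heq
    · intro u hu
      obtain ⟨t', hmem, heq⟩ := hmain.2 u hu
      exact ⟨t', hmem, heq⟩

end LineAux


/-- For every `n ≥ 1`, the type-2 line sub-game of the standard
Game of Cycles (a pre-marked edge at the left end directed toward the path,
•→•—•⋯•—•) has Grundy value `n - 1`. -/
theorem line_type2_nimber_standard (n : ℕ) (hn : 1 ≤ n) :
    lineNim false (some true) none n = n - 1 := by
  unfold lineNim
  simp only [Option.map_some, Option.toList_some, Option.map_none, Option.toList_none,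
    List.append_nil, Option.isSome_some, Option.isSome_none]
  have hes : ([some true] ++ List.replicate n (none : EdgeState)) =
      (some true : EdgeState) :: List.replicate n none := rfl
  rw [hes]
  have hlen : ((some true : EdgeState) :: List.replicate n none).length = n + 1 := by simp
  rw [hlen]
  have hval : LineAux.Valid (some true) (List.replicate n (none : EdgeState)) := by
    refine ⟨LineAux.chain_replicate_none n _, ?_⟩
    rw [List.getLast?_replicate, if_neg (by omega)]
  have hcnt : (List.replicate n (none : EdgeState)).count none ≤ n + 1 := by
    simp [List.count_replicate]
  rw [LineAux.grundy_eq (n+1) _ hval hcnt, LineAux.segf_replicate]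
end

section
/- Let k be a positive integer, let S : Fin k → Set (Fin k × Fin k), let V : Fin k → (Fin k × Fin k) → ℕ → ℕ → Prop be a validity predicate such that V i (p,q) a b implies (p,q) ∈ S i, and let G : Fin k → ℕ → ℕ satisfy the Sprague–Grundy recursion G i n = mex { G p a XOR G q b | (p,q) ∈ Fin k × Fin k, a + b + 1 = n, V i (p,q) a b } for all i and all n ≥ 1. Let T and s be positive integers with s ≥ T. Suppose: (1) for all a, b ≥ s − T and all (p,q) ∈ S i, V i (p,q) a b holds; (2) if a < s − T and V i (p,q) a b fails for some b ≥ s − T, then V i (p,q) a b' fails for every natural number b'; (3) symmetrically, if b < s − T and V i (p,q) a b fails for some a ≥ s − T, then V i (p,q) a' b fails for every natural number a'. Suppose furthermore that for all n with s + 1 ≤ n ≤ 2s + 1 and all i ∈ Fin k, G i n = G i (n − T). Then for all n ≥ s + 1 and all i ∈ Fin k, G i n = G i (n − T). -/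
/-- Periodicity transfer theorem for families of impartial games
`g_i(n)` (`i ∈ Fin k`) whose every playable move `(p, q, a, b)` splits `g_i(n)`
into the disjoint sum of `g_p(a)` and `g_q(b)` with `a + b + 1 = n`, so that the
Grundy values `G` satisfy the Sprague–Grundy recursion
`G i n = mex {G p a XOR G q b | (p,q,a,b) a valid move on g_i(n)}`.
If validity satisfies conditions (1)–(3) below and the period-`T` coincidence
`G i n = G i (n - T)` holds for all `n ∈ [s+1, 2s+1]`, then it holds for all
`n ≥ s + 1`. -/
theorem grundy_eventually_periodic
    (k : ℕ) (hk : 0 < k)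
    (S : Fin k → Set (Fin k × Fin k))
    (V : Fin k → Fin k × Fin k → ℕ → ℕ → Prop)
    (hVS : ∀ i pq a b, V i pq a b → pq ∈ S i)
    (G : Fin k → ℕ → ℕ)
    (hG : ∀ i n, 1 ≤ n → G i n =
      mex {m | ∃ (p q : Fin k) (a b : ℕ), a + b + 1 = n ∧ V i (p, q) a b ∧
        m = Nat.xor (G p a) (G q b)})
    (T s : ℕ) (hT : 0 < T) (hs : 0 < s) (hsT : T ≤ s)
    (h1 : ∀ i (pq : Fin k × Fin k) a b,
      pq ∈ S i → s - T ≤ a → s - T ≤ b → V i pq a b)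
    (h2 : ∀ i pq a b, a < s - T → s - T ≤ b → ¬ V i pq a b →
      ∀ b', ¬ V i pq a b')
    (h3 : ∀ i pq a b, b < s - T → s - T ≤ a → ¬ V i pq a b →
      ∀ a', ¬ V i pq a' b)
    (hbase : ∀ n, s + 1 ≤ n → n ≤ 2 * s + 1 → ∀ i : Fin k, G i n = G i (n - T)) :
    ∀ n, s + 1 ≤ n → ∀ i : Fin k, G i n = G i (n - T) := by
  intro n
  induction n using Nat.strong_induction_on with
  | _ n IH =>
  intro hn i
  by_cases hcase : n ≤ 2 * s + 1
  · exact hbase n hn hcase i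
  push_neg at hcase
  have hn1 : 1 ≤ n := by omega
  have hnT : 1 ≤ n - T := by omega
  rw [hG i n hn1, hG i (n - T) hnT]
  congr 1
  ext m
  simp only [Set.mem_setOf_eq]
  constructor
  · rintro ⟨p, q, a, b, hab, hV, rfl⟩
    by_cases hb : s + 1 ≤ b
    · refine ⟨p, q, a, b - T, by omega, ?_, ?_⟩
      · by_cases ha : s - T ≤ a
        · exact h1 i (p, q) a (b - T) (hVS i (p, q) a b hV) ha (by omega)
        · by_contra hnV
          exact h2 i (p, q) a (b - T) (by omega) (by omega) hnV b hV
      · rw [IH b (by omega) (by omega) q]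
    · have ha : s + 1 ≤ a := by omega
      refine ⟨p, q, a - T, b, by omega, ?_, ?_⟩
      · by_cases hb' : s - T ≤ b
        · exact h1 i (p, q) (a - T) b (hVS i (p, q) a b hV) (by omega) hb'
        · by_contra hnV
          exact h3 i (p, q) (a - T) b (by omega) (by omega) hnV a hV
      · rw [IH a (by omega) (by omega) p]
  · rintro ⟨p, q, a, b, hab, hV, rfl⟩
    by_cases hb : s - T < b
    · refine ⟨p, q, a, b + T, by omega, ?_, ?_⟩
      · by_cases ha : s - T ≤ a
        · exact h1 i (p, q) a (b + T) (hVS i (p, q) a b hV) ha (by omega)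
        · by_contra hnV
          exact h2 i (p, q) a (b + T) (by omega) (by omega) hnV b hV
      · have := IH (b + T) (by omega) (by omega) q
        rw [this, Nat.add_sub_cancel]
    · have ha : s - T < a := by omega
      refine ⟨p, q, a + T, b, by omega, ?_, ?_⟩
      · by_cases hb' : s - T ≤ b
        · exact h1 i (p, q) (a + T) b (hVS i (p, q) a b hV) (by omega) hb'
        · by_contra hnV
          exact h3 i (p, q) (a + T) b (by omega) (by omega) hnV a hV
      · have := IH (a + T) (by omega) (by omega) p
        rw [this, Nat.add_sub_cancel]
end

section
/- In the standard Game of Cycles, consider the line games obtained by cutting a cycle along a marked edge: a path of n unmarked edges with pre-marked directed edges at both ends, either both pointing into the path (•→•—•⋯•—•←•) or both pointing away from the path (•←•—•⋯•—•→•), where the boundary nodes at the far ends (the endpoints of the pre-marked edges not on the path) are entirely exempt from the no-source/no-sink restriction. For every n ≥ 1, each of these two games has Grundy value 0 if n is odd and 1 if n is even. -/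
namespace CutCycleAux

def Adm (es : List EdgeState) : Prop :=
  ∀ j (c d : Bool), es[j]? = some (some c) → es[j+1]? = some (some d) → c = d

def Dead (es : List EdgeState) : Prop :=
  ∀ j, es[j+1]? = some none →
    ∃ c : Bool, es[j]? = some (some c) ∧ es[j+2]? = some (some (!c))

lemma lineOK_iff (es : List EdgeState) : LineOK false true true es ↔ Adm es := by
  constructor
  · rintro ⟨h1, h2, -, -⟩ j c d hc hd
    rcases h2 with h2 | h2
    · cases h2
    cases c <;> cases d
    · rfl
    · exact absurd ⟨hc, hd⟩ (h2 j)
    · exact absurd ⟨hc, hd⟩ (h1 j)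
    · rfl
  · intro h
    refine ⟨?_, Or.inr ?_, Or.inl rfl, Or.inl rfl⟩
    · rintro j ⟨hc, hd⟩
      exact absurd (h j true false hc hd) (by simp)
    · rintro j ⟨hc, hd⟩
      exact absurd (h j false true hc hd) (by simp)

lemma Adm.tail {x : EdgeState} {es : List EdgeState} (h : Adm (x :: es)) : Adm es :=
  fun j c d hc hd => h (j+1) c d (by simpa using hc) (by simpa using hd)

lemma Dead.tail {x : EdgeState} {es : List EdgeState} (h : Dead (x :: es)) : Dead es := by
  intro j hj
  obtain ⟨c, hc, hc2⟩ := h (j+1) (by simpa using hj)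
  exact ⟨c, by simpa using hc, by simpa using hc2⟩

lemma parity_of_dead : ∀ (N : ℕ) (es : List EdgeState) (a b : Bool), es.length ≤ N →
    Adm (some a :: es) → Dead (some a :: es) →
    (some a :: es).getLast? = some (some b) →
    (some a :: es).count none % 2 = if a = b then 0 else 1 := by
  intro N
  induction N with
  | zero =>
    intro es a b hlen _ _ hlast
    obtain rfl : es = [] := List.length_eq_zero_iff.mp (Nat.le_zero.mp hlen)
    simp at hlast
    simp [hlast, List.count_cons]
  | succ N ih =>
    intro es a b hlen hadm hdead hlast
    match es with
    | [] =>
      simp at hlast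
      simp [hlast, List.count_cons]
    | some c :: es' =>
      have hca : a = c := hadm 0 a c (by simp) (by simp)
      subst hca
      have := ih es' a b (by simpa using Nat.le_of_succ_le_succ hlen)
        hadm.tail hdead.tail (by rw [← hlast, List.getLast?_cons_cons])
      simpa [List.count_cons] using this
    | none :: es' =>
      obtain ⟨c, hc, hc2⟩ := hdead 0 (by simp)
      simp only [List.getElem?_cons_zero, Option.some.injEq] at hc
      subst hc
      match es', hc2 with
      | [], hc2 => simp at hc2
      | x :: es'', hc2 =>
        simp only [List.getElem?_cons_succ, List.getElem?_cons_zero, Option.some.injEq] at hc2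
        subst hc2
        have htail : Dead (some (!a) :: es'') := (hdead.tail).tail
        have hatail : Adm (some (!a) :: es'') := (hadm.tail).tail
        have hlast' : (some (!a) :: es'').getLast? = some (some b) := by
          rw [← hlast, List.getLast?_cons_cons, List.getLast?_cons_cons]
        have hlen' : es''.length ≤ N := by simp at hlen; omega
        have := ih es'' (!a) b hlen' hatail htail hlast'
        have hcount : (some a :: none :: some (!a) :: es'').count none
            = (some (!a) :: es'').count none + 1 := by
          simp [List.count_cons]
        rw [hcount]
        by_cases hab : a = b
        · have h2 : ¬((!a) = b) := by cases a <;> cases b <;> simp_all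
          rw [if_neg h2] at this
          rw [if_pos hab]
          omega
        · have h2 : (!a) = b := by cases a <;> cases b <;> simp_all
          rw [if_pos h2] at this
          rw [if_neg hab]
          omega

lemma count_zero_dead {es : List EdgeState} (h : es.count none = 0) : Dead es := by
  intro j hj
  exact absurd (List.count_eq_zero.mp h) (fun hn => hn (List.mem_of_getElem? hj))

lemma count_set : ∀ (es : List EdgeState) (p : ℕ) (d : Bool), es[p]? = some none →
    (es.set p (some d)).count none + 1 = es.count none := by
  intro es
  induction es with
  | nil => intro p d h; simp at h
  | cons x xs ih =>
    intro p d h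
    cases p with
    | zero =>
      simp only [List.getElem?_cons_zero, Option.some.injEq] at h
      subst h
      simp [List.count_cons]
    | succ p =>
      simp only [List.getElem?_cons_succ] at h
      have := ih p d h
      simp only [List.set_cons_succ, List.count_cons]
      cases x <;> simp <;> omega

lemma mex_subset_one {S : Set ℕ} (h : S ⊆ {1}) : mex S = 0 := by
  have h0 : 0 ∈ {n | n ∉ S} := fun h0 => by simpa using h h0
  exact Nat.sInf_eq_zero.mpr (Or.inl h0)

lemma mex_eq_one {S : Set ℕ} (h : S ⊆ {0}) (hne : S.Nonempty) : mex S = 1 := by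
  obtain ⟨x, hx⟩ := hne
  have hx0 : x = 0 := h hx
  subst hx0
  have h1 : 1 ∈ {n | n ∉ S} := fun h1 => by simpa using h h1
  have hle : mex S ≤ 1 := Nat.sInf_le h1
  have hne0 : mex S ≠ 0 := by
    intro h0
    rcases Nat.sInf_eq_zero.mp h0 with h' | h'
    · exact h' hx
    · rw [Set.eq_empty_iff_forall_notMem] at h'
      exact h' 1 h1
  omega

end CutCycleAux

namespace CutCycleAux

lemma bool_ne {x y : Bool} (h : x ≠ y) : y = !x := by
  cases x <;> cases y <;> simp_all

lemma grundy_line : ∀ (m : ℕ) (es0 : List EdgeState) (a b : Bool) (fuel : ℕ),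
    (some (a : Bool) :: es0 : List EdgeState).count none = m →
    Adm (some a :: es0) →
    (some a :: es0 : List EdgeState).getLast? = some (some b) → a ≠ b → m ≤ fuel →
    grundyAux (lineMoves false true true) fuel (some a :: es0) = (m + 1) % 2 := by
  intro m
  induction m using Nat.strong_induction_on with
  | _ m ih =>
    intro es0 a b fuel hcount hadm hlast hab hfuel
    set L : List EdgeState := some a :: es0 with hL
    rcases Nat.eq_zero_or_pos m with rfl | hm
    · exfalso
      have hpar := parity_of_dead es0.length es0 a b le_rfl hadm
        (count_zero_dead hcount) hlast
      rw [if_neg hab, hcount] at hpar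
      omega
    · obtain ⟨f, rfl⟩ : ∃ f, fuel = f + 1 := ⟨fuel - 1, by omega⟩
      rw [grundyAux]
      -- every option has value m % 2
      have himg : (grundyAux (lineMoves false true true) f) ''
          (lineMoves false true true L) ⊆ {m % 2} := by
        rintro x ⟨es', ⟨p, d, hp, rfl, hok⟩, rfl⟩
        have hadm' : Adm (L.set p (some d)) := (lineOK_iff _).mp hok
        have hc' : (L.set p (some d)).count none = m - 1 := by
          have := count_set L p d hp
          omega
        have hp0 : p ≠ 0 := by
          intro h
          rw [h, hL] at hp
          simp at hp
        obtain ⟨q, rfl⟩ : ∃ q, p = q + 1 := ⟨p - 1, by omega⟩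
        have hset : L.set (q+1) (some d) = some a :: es0.set q (some d) := by
          rw [hL]; rfl
        have hp' : L[q+1]? = some (none : EdgeState) := by
          exact hp
        have hlast0 : L[L.length - 1]? = some (some b) := by
          rw [← List.getLast?_eq_getElem?]; exact hlast
        have hpne : q + 1 ≠ L.length - 1 := by
          intro h
          rw [h, hlast0] at hp'
          simp at hp'
        have hlast' : (L.set (q+1) (some d)).getLast? = some (some b) := by
          rw [List.getLast?_eq_getElem?, List.length_set, List.getElem?_set_ne hpne]
          exact hlast0
        rw [hset] at hadm' hc' hlast'
        have hih := ih (m-1) (by omega) (es0.set q (some d)) a b f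
          hc' hadm' hlast' hab (by omega)
        rw [Set.mem_singleton_iff, hset, hih]
        congr 1
        omega
      rcases Nat.mod_two_eq_zero_or_one m with hm2 | hm2
      · -- m even : there is a move, mex = 1
        have hne : (lineMoves false true true L).Nonempty := by
          by_contra hno
          have hdead : Dead L := by
            intro j hj
            have hplen : j + 1 < L.length := by
              rcases List.getElem?_eq_some_iff.mp hj with ⟨h, -⟩
              exact h
            have hviol : ∀ d : Bool, ∃ (j' : ℕ) (c c' : Bool),
                (L.set (j+1) (some d))[j']? = some (some c) ∧
                (L.set (j+1) (some d))[j'+1]? = some (some c') ∧ c ≠ c' := by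
              intro d
              have hnok : ¬ LineOK false true true (L.set (j+1) (some d)) := by
                intro hok
                exact hno ⟨L.set (j+1) (some d), ⟨j+1, d, hj, rfl, hok⟩⟩
              rw [lineOK_iff] at hnok
              unfold Adm at hnok
              push_neg at hnok
              exact hnok
            have hset : ∀ d : Bool, (L.set (j+1) (some d))[j+1]? = some (some d) := by
              intro d
              rw [List.getElem?_set_self hplen]
            have hloc : ∀ d : Bool,
                L[j]? = some (some (!d)) ∨ L[j+2]? = some (some (!d)) := by
              intro d
              obtain ⟨j', c, c', h1, h2, hcc⟩ := hviol d
              rcases eq_or_ne j' (j+1) with rfl | hne1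
              · right
                have hcd : d = c := by
                  rw [hset d] at h1
                  simpa using h1
                subst hcd
                have h2' : L[j+2]? = some (some c') := by
                  rw [← h2]
                  exact (List.getElem?_set_ne (show j+1 ≠ j+1+1 by omega)).symm
                rw [h2', bool_ne hcc]
              · rcases eq_or_ne (j'+1) (j+1) with heq | hne2
                · left
                  obtain rfl : j' = j := by omega
                  have hcd : d = c' := by
                    rw [hset d] at h2
                    simpa using h2
                  subst hcd
                  have h1' : L[j']? = some (some c) := by
                    rw [← h1]
                    exact (List.getElem?_set_ne (show j'+1 ≠ j' by omega)).symm
                  rw [h1', bool_ne hcc.symm]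
                · exfalso
                  have e1 : L[j']? = some (some c) := by
                    rw [← h1]
                    exact (List.getElem?_set_ne (Ne.symm hne1)).symm
                  have e2 : L[j'+1]? = some (some c') := by
                    rw [← h2]
                    exact (List.getElem?_set_ne (Ne.symm hne2)).symm
                  exact hcc (hadm j' c c' e1 e2)
            rcases hloc true with h1 | h1 <;> rcases hloc false with h2 | h2
            · rw [h1] at h2; simp at h2
            · exact ⟨false, by simpa using h1, by simpa using h2⟩
            · exact ⟨true, by simpa using h2, by simpa using h1⟩
            · rw [h1] at h2; simp at h2
          have hpar := parity_of_dead es0.length es0 a b le_rfl hadm hdead hlast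
          rw [if_neg hab, hcount] at hpar
          omega
        obtain ⟨es', hes'⟩ := hne
        rw [hm2] at himg
        rw [mex_eq_one himg ⟨_, Set.mem_image_of_mem _ hes'⟩]
        omega
      · -- m odd : mex = 0
        rw [hm2] at himg
        rw [mex_subset_one himg]
        omega

end CutCycleAux

namespace CutCycleAux

lemma lineNim_eval (a b : Bool) (hab : a ≠ b) (n : ℕ) (hn : 1 ≤ n) :
    lineNim false (some a) (some b) n = (n + 1) % 2 := by
  have hes : (((some a : Option Bool)).map some).toList ++ List.replicate n none ++
      (((some b : Option Bool)).map some).toList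
      = some a :: (List.replicate n none ++ [some b]) := by simp
  show grundyAux (lineMoves false (some a).isSome (some b).isSome) _ _ = _
  rw [hes]
  set es0 : List EdgeState := List.replicate n none ++ [some b] with hes0
  have hlen : (some a :: es0 : List EdgeState).length = n + 2 := by simp [hes0]
  have hmid : ∀ i, 1 ≤ i → i ≤ n → (some a :: es0 : List EdgeState)[i]? = some none := by
    intro i h1 h2
    obtain ⟨i, rfl⟩ : ∃ i', i = i' + 1 := ⟨i - 1, by omega⟩
    rw [List.getElem?_cons_succ, hes0, List.getElem?_append_left (by simp; omega)]
    simp [List.getElem?_replicate, Nat.lt_of_succ_le h2]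
  have hout : ∀ i, n + 2 ≤ i → (some a :: es0 : List EdgeState)[i]? = none := by
    intro i hi
    apply List.getElem?_eq_none_iff.mpr
    omega
  have hadm : Adm (some a :: es0) := by
    intro j c d hc hd
    exfalso
    rcases Nat.eq_zero_or_pos j with rfl | hj
    · rw [hmid 1 le_rfl hn] at hd
      simp at hd
    · by_cases hjn : j ≤ n
      · rw [hmid j hj hjn] at hc
        simp at hc
      · rw [hout (j+1) (by omega)] at hd
        simp at hd
  have hlast : (some a :: es0 : List EdgeState).getLast? = some (some b) := by
    rw [hes0, ← List.cons_append, List.getLast?_concat]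
  have hcount : (some a :: es0 : List EdgeState).count none = n := by
    simp [hes0, List.count_cons, List.count_append, List.count_replicate]
  rw [hlen]
  exact grundy_line n es0 a b (n+2) hcount hadm hlast hab (by omega)

end CutCycleAux


/-- Cutting a cycle along a marked edge in the standard Game of
Cycles can also yield a path of `n` unmarked edges with pre-marked directed edges at
both ends either both pointing into the path (•→•—•⋯•—•←•) or both pointing away
from the path (•←•—•⋯•—•→•), the two far-end boundary nodes being exempt from the
no-source/no-sink rule. For every `n ≥ 1`, each of these games has Grundy value `0`
if `n` is odd and `1` if `n` is even. -/
theorem cut_cycle_type2_type3_nimber_standard (n : ℕ) (hn : 1 ≤ n) :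
    lineNim false (some true) (some false) n = (if Odd n then 0 else 1) ∧
    lineNim false (some false) (some true) n = (if Odd n then 0 else 1) := by
  have h1 := CutCycleAux.lineNim_eval true false (by simp) n hn
  have h2 := CutCycleAux.lineNim_eval false true (by simp) n hn
  have key : (n + 1) % 2 = if Odd n then 0 else 1 := by
    by_cases h : Odd n
    · rw [if_pos h]
      have := Nat.odd_iff.mp h
      omega
    · rw [if_neg h]
      have := Nat.even_iff.mp (Nat.not_odd_iff_even.mp h)
      omega
  exact ⟨h1.trans key, h2.trans key⟩
end
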